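/- Every subgroup of PGL(2,ℤ) of order 3 is conjugate in PGL(2,ℤ) to the subgroup G₃ generated by [U]; that is, for every subgroup H of PGL(2,ℤ) with exactly 3 elements there exists g ∈ PGL(2,ℤ) such that g H g⁻¹ = G₃. -/

import Mathlib

open Matrix

abbrev GL2Z := GL (Fin 2) ℤ

/-- PGL(2,ℤ): the quotient of GL(2,ℤ) by its center {I, -I}. -/
abbrev PGL2Z := GL2Z ⧸ Subgroup.center GL2Z

/-- The image of a matrix in PGL(2,ℤ). -/
def cls (M : GL2Z) : PGL2Z := QuotientGroup.mk M

def Smat : GL2Z := ⟨!![0,1;1,0], !![0,1;1,0], by decide, by decide⟩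
def Nmat : GL2Z := ⟨!![-1,0;0,1], !![-1,0;0,1], by decide, by decide⟩
def Tmat : GL2Z := ⟨!![0,-1;1,0], !![0,1;-1,0], by decide, by decide⟩
def Umat : GL2Z := ⟨!![0,-1;1,1], !![1,1;-1,0], by decide, by decide⟩

lemma rep_aux (n : ℕ) : ∀ (A B C : ℤ), 0 < A → A ≤ n → B^2 - 4*A*C = -3 →
    ∃ x y : ℤ, A*x^2 + B*x*y + C*y^2 = 1 := by
  induction n with
  | zero => intro A B C hA hle _; omega
  | succ n ih =>
    intro A B C hA hle hD
    by_cases hA1 : A = 1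
    · exact ⟨1, 0, by subst hA1; ring⟩
    · have hA2 : 2 ≤ A := by omega
      set q := B / (2*A) with hq
      set r := B % (2*A) with hr
      have hBr : 2*A*q + r = B := Int.mul_ediv_add_emod B (2*A)
      have hr0 : 0 ≤ r := Int.emod_nonneg B (by omega)
      have hr1 : r < 2*A := Int.emod_lt_of_pos B (by omega)
      obtain ⟨m, s, hs, hsb⟩ : ∃ m s : ℤ, s = 2*A*m + B ∧ s^2 ≤ A^2 := by
        by_cases hc : r ≤ A
        · exact ⟨-q, r, by linear_combination hBr, by nlinarith⟩
        · exact ⟨-q - 1, r - 2*A, by linear_combination hBr, by nlinarith⟩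
      set C₁ := A*m^2 + B*m + C with hC1
      have key : 4*A*C₁ = s^2 + 3 := by rw [hC1, hs]; ring_nf; linarith [hD]
      have hC1pos : 0 < C₁ := by nlinarith
      have hC1lt : C₁ < A := by nlinarith
      obtain ⟨X, Y, hXY⟩ := ih C₁ (-s) A hC1pos (by omega) (by nlinarith)
      exact ⟨m*X - Y, X, by linear_combination hXY + X^2 * hC1.symm + X*Y*hs⟩

def E1 : GL2Z := ⟨!![1,1;0,1], !![1,-1;0,1], by decide, by decide⟩
def E2 : GL2Z := ⟨!![1,0;1,1], !![1,0;-1,1], by decide, by decide⟩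

lemma neg_one_mem_center : (-1 : GL2Z) ∈ Subgroup.center GL2Z := by
  rw [Subgroup.mem_center_iff]; intro g; simp

lemma det_pm (M : GL2Z) : (M.val).det = 1 ∨ (M.val).det = -1 := by
  have h : (M.val).det * ((↑M⁻¹ : Matrix (Fin 2) (Fin 2) ℤ)).det = 1 := by
    rw [← Matrix.det_mul, M.mul_inv, Matrix.det_one]
  exact Int.isUnit_iff.mp (IsUnit.of_mul_eq_one _ h)

lemma center_char (M : GL2Z) (h : M ∈ Subgroup.center GL2Z) : M = 1 ∨ M = -1 := by
  rw [Subgroup.mem_center_iff] at h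
  obtain ⟨a, b, c, d, hM⟩ : ∃ a b c d, M.val = !![a,b;c,d] :=
    ⟨_, _, _, _, (Matrix.etaExpand_eq M.val).symm⟩
  have h1 := congrArg Units.val (h E1)
  have h2 := congrArg Units.val (h E2)
  rw [Units.val_mul, Units.val_mul, hM] at h1 h2
  have e1 : (!![(1:ℤ),1;0,1] * !![a,b;c,d]) = (!![a,b;c,d] * !![(1:ℤ),1;0,1]) := h1
  have e2 : (!![(1:ℤ),0;1,1] * !![a,b;c,d]) = (!![a,b;c,d] * !![(1:ℤ),0;1,1]) := h2
  rw [Matrix.mul_fin_two, Matrix.mul_fin_two] at e1 e2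
  have hc : c = 0 := by have := congrFun (congrFun e1 1) 1; simpa using this
  have hb : b = 0 := by have := congrFun (congrFun e2 0) 0; simpa using this
  have had : a = d := by have := congrFun (congrFun e1 0) 1; simp at this; omega
  have hdet := det_pm M
  rw [hM, Matrix.det_fin_two_of] at hdet
  have ha : a = 1 ∨ a = -1 := by
    subst hb hc had; rcases hdet with h | h
    · exact mul_self_eq_one_iff.mp (by linarith)
    · exfalso; nlinarith
  rcases ha with ha | ha
  · left; ext i j
    fin_cases i <;> fin_cases j <;>
      simp [hM, ha, hb, hc, ← had, Matrix.one_apply]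
  · right; ext i j
    fin_cases i <;> fin_cases j <;>
      simp [hM, ha, hb, hc, ← had, Matrix.one_apply]

lemma key (M : GL2Z) (hM3 : M^3 = -1) (hMne : (M : PGL2Z) ≠ 1) :
    ∃ g : PGL2Z, g * (M : PGL2Z) * g⁻¹ = cls Umat := by
  have hMne1 : M ≠ -1 := by
    rintro rfl
    exact hMne ((QuotientGroup.eq_one_iff _).mpr neg_one_mem_center)
  obtain ⟨a, b, c, d, hA⟩ : ∃ a b c d, M.val = !![a,b;c,d] :=
    ⟨_, _, _, _, (Matrix.etaExpand_eq M.val).symm⟩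
  -- cube equation at matrix level
  have h3m : M.val * M.val * M.val = -1 := by
    have := congrArg Units.val hM3
    rw [Units.val_pow_eq_pow_val, Units.val_neg, Units.val_one, pow_succ, pow_two] at this
    exact this
  -- determinant is 1
  have hdet : a*d - b*c = 1 := by
    have h1 : (M.val.det)^3 = 1 := by
      rw [← Matrix.det_pow, pow_succ, pow_two, h3m]
      simp [Matrix.det_neg, Matrix.det_one]
    have h2 : (M.val.det - 1) * ((M.val.det)^2 + M.val.det + 1) = 0 := by linear_combination h1
    have h3 : M.val.det = 1 := by
      rcases mul_eq_zero.mp h2 with h | h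
      · linarith
      · nlinarith [sq_nonneg (M.val.det + 1), sq_nonneg M.val.det]
    rw [hA, Matrix.det_fin_two_of] at h3; linarith
  -- entry equations
  rw [hA, Matrix.mul_fin_two, Matrix.mul_fin_two] at h3m
  have e00 : (a*a+b*c)*a + (a*b+b*d)*c = -1 := by
    have := congrFun (congrFun h3m 0) 0; simpa using this
  have e01 : (a*a+b*c)*b + (a*b+b*d)*d = 0 := by
    have := congrFun (congrFun h3m 0) 1; simpa using this
  have e10 : (c*a+d*c)*a + (c*b+d*d)*c = 0 := by
    have := congrFun (congrFun h3m 1) 0; simpa using this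
  have e11 : (c*a+d*c)*b + (c*b+d*d)*d = -1 := by
    have := congrFun (congrFun h3m 1) 1; simpa using this
  have hAne : ¬(a = -1 ∧ b = 0 ∧ c = 0 ∧ d = -1) := by
    rintro ⟨rfl, rfl, rfl, rfl⟩
    apply hMne1
    ext i j
    rw [hA]
    fin_cases i <;> fin_cases j <;> simp [Matrix.one_apply]
  -- trace is 1
  have htr : a + d = 1 := by
    obtain ⟨t, ht⟩ : ∃ t : ℤ, t = a + d := ⟨_, rfl⟩
    have E1 : b*(t^2-1) = 0 := by linear_combination e01 + b*hdet + b*(t+a+d)*ht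
    have E2 : c*(t^2-1) = 0 := by linear_combination e10 + c*hdet + c*(t+a+d)*ht
    have E3 : a*(t^2-1) = t - 1 := by
      linear_combination e00 + (2*a + d)*hdet + (a*t + a*(a+d) - 1)*ht - hdet*0
    have E4 : d*(t^2-1) = t - 1 := by
      linear_combination e11 + (a + 2*d)*hdet + (d*t + d*(a+d) - 1)*ht
    rw [← ht]
    by_contra h1t
    have h2t : t ≠ -1 := by rintro rfl; norm_num at E3
    have htt : t^2 - 1 ≠ 0 := by
      intro h
      have : (t-1)*(t+1) = 0 := by linear_combination h
      rcases mul_eq_zero.mp this with h | h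
      · exact h1t (by linarith)
      · exact h2t (by linarith)
    have hb : b = 0 := by rcases mul_eq_zero.mp E1 with h | h; exact h; exact absurd h htt
    have hc : c = 0 := by rcases mul_eq_zero.mp E2 with h | h; exact h; exact absurd h htt
    have had : a = d := mul_right_cancel₀ htt (by rw [E3, E4])
    have haa : a * a = 1 := by rw [hb, hc] at hdet; nlinarith [hdet, had]
    rcases mul_self_eq_one_iff.mp haa with ha | ha
    · have htval : t = 2 := by omega
      rw [htval, ha] at E3; norm_num at E3
    · exact hAne ⟨ha, hb, hc, by omega⟩
  -- discriminant
  have hdisc : (d - a)^2 + 4*b*c = -3 := by linear_combination (a+d+1)*htr - 4*hdet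
  -- find vector with unimodular (v, Mv)
  obtain ⟨x, y, e, hee, he⟩ :
      ∃ x y e : ℤ, e*e = 1 ∧ c*x^2 + (d-a)*x*y - b*y^2 = e := by
    rcases lt_trichotomy c 0 with hc | hc | hc
    · obtain ⟨x, y, hxy⟩ := rep_aux (-c).toNat (-c) (a-d) b (by omega)
        (by simp) (by linear_combination hdisc)
      exact ⟨x, y, -1, by norm_num, by linear_combination -hxy⟩
    · exfalso; rw [hc] at hdisc; nlinarith [sq_nonneg (d-a)]
    · obtain ⟨x, y, hxy⟩ := rep_aux c.toNat c (d-a) (-b) hc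
        (by simp) (by linear_combination hdisc)
      exact ⟨x, y, 1, by norm_num, by linear_combination hxy⟩
  refine ⟨(cls ⟨!![x, a*x+b*y; y, c*x+d*y], !![e*(c*x+d*y), -(e*(a*x+b*y)); -(e*y), e*x], ?_, ?_⟩)⁻¹, ?_⟩
  · rw [Matrix.mul_fin_two]
    ext i j
    fin_cases i <;> fin_cases j <;> simp [Matrix.one_apply] <;>
      first | ring1 | linear_combination e*he + hee
  · rw [Matrix.mul_fin_two]
    ext i j
    fin_cases i <;> fin_cases j <;> simp [Matrix.one_apply] <;>
      first | ring1 | linear_combination e*he + hee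
  set P : GL2Z := ⟨_, _, _, _⟩ with hP
  have hMP : M * P = P * Umat := by
    have hPv : P.val = !![x, a*x+b*y; y, c*x+d*y] := rfl
    have hUv : Umat.val = !![(0:ℤ),-1;1,1] := rfl
    ext i j
    rw [Units.val_mul, Units.val_mul, hA, hPv, hUv, Matrix.mul_fin_two, Matrix.mul_fin_two]
    fin_cases i <;> fin_cases j <;> simp <;>
      first
      | ring1
      | linear_combination (x*a + y*b)*htr - x*hdet
      | linear_combination (x*c + y*d)*htr - y*hdet
  have hconj : P⁻¹ * M * P = Umat := by
    rw [mul_assoc, hMP, ← mul_assoc, inv_mul_cancel, one_mul]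
  show (cls P)⁻¹ * (QuotientGroup.mk M) * ((cls P)⁻¹)⁻¹ = cls Umat
  simp only [cls, inv_inv]
  rw [← QuotientGroup.mk_inv, ← QuotientGroup.mk_mul, ← QuotientGroup.mk_mul, hconj]

lemma conj_elt (x : PGL2Z) (hx3 : x^3 = 1) (hx1 : x ≠ 1) :
    ∃ g : PGL2Z, g * x * g⁻¹ = cls Umat := by
  obtain ⟨M, rfl⟩ := QuotientGroup.mk_surjective x
  have hc : M^3 ∈ Subgroup.center GL2Z := by
    rw [← QuotientGroup.eq_one_iff]
    rw [show ((M^3 : GL2Z) : PGL2Z) = ((M : PGL2Z))^3 from rfl]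
    exact hx3
  rcases center_char _ hc with h | h
  · -- replace M by -M
    have hmm : ((-M : GL2Z) : PGL2Z) = (M : PGL2Z) := by
      rw [show (-M : GL2Z) = M * (-1) by simp]
      rw [QuotientGroup.mk_mul, (QuotientGroup.eq_one_iff _).mpr neg_one_mem_center, mul_one]
    have h3 : (-M)^3 = -1 := by
      rw [Odd.neg_pow (by decide), h]
    obtain ⟨g, hg⟩ := key (-M) h3 (by rw [hmm]; exact hx1)
    exact ⟨g, by rw [← hmm]; exact hg⟩
  · exact key M h hx1

/-- Every subgroup of PGL(2,ℤ) of order 3 is conjugate to G₃ = ⟨[U]⟩. -/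
theorem stmt_2 (H : Subgroup PGL2Z) (hH : Nat.card H = 3) :
    ∃ g : PGL2Z,
      Subgroup.map (MulAut.conj g).toMonoidHom H = Subgroup.closure {cls Umat} := by
  have hfin : Finite H := Nat.finite_of_card_ne_zero (by omega)
  have hnt : Nontrivial H := Finite.one_lt_card_iff_nontrivial.mp (by omega)
  obtain ⟨⟨y, hyH⟩, hy1⟩ := exists_ne (1 : H)
  have hyne : y ≠ 1 := by
    intro h; apply hy1; ext; exact h
  have hdvd : orderOf y ∣ 3 := hH ▸ Subgroup.orderOf_dvd_natCard H hyH
  have hord : orderOf y = 3 := by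
    rcases (Nat.dvd_prime Nat.prime_three).mp hdvd with h | h
    · exact absurd (orderOf_eq_one_iff.mp h) hyne
    · exact h
  have hzp : Subgroup.zpowers y = H := by
    apply Subgroup.eq_of_le_of_card_ge (Subgroup.zpowers_le.mpr hyH)
    rw [Nat.card_zpowers, hord, hH]
  have hy3 : y^3 = 1 := by rw [← hord]; exact pow_orderOf_eq_one y
  obtain ⟨g, hg⟩ := conj_elt y hy3 hyne
  refine ⟨g, ?_⟩
  rw [← hzp, MonoidHom.map_zpowers]
  rw [show (MulAut.conj g).toMonoidHom y = g * y * g⁻¹ from rfl, hg,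
    Subgroup.zpowers_eq_closure]
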